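/- The mutual coherence of any two orthonormal bases A, B of ℂ^N satisfies μ(A,B) ≥ N^{-1/2}, and this lower bound is attained by the discrete Fourier basis and the standard basis. -/

import Mathlib

open Finset Real

/-- The mutual coherence `μ(A,B) = sup_{j,k} |⟨a_j, b_k⟩|` of two systems of
vectors in `ℂ^N`. -/
noncomputable def mutualCoherence {N : ℕ} (A B : Fin N → Fin N → ℂ) : ℝ :=
  ⨆ j : Fin N, ⨆ k : Fin N, ‖∑ t, (starRingEnd ℂ) (A j t) * B k t‖

/-- The discrete Fourier basis vectors `φ_k(t) = N^{-1/2} e^{2πi tk/N}` of `ℂ^N`. -/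
noncomputable def dftBasis (N : ℕ) (k t : Fin N) : ℂ :=
  ((1 / Real.sqrt N : ℝ) : ℂ) * Complex.exp (2 * π * Complex.I * t * k / N)

/-- The standard basis of `ℂ^N`. -/
def stdBasis (N : ℕ) (j t : Fin N) : ℂ := if t = j then 1 else 0

/-- The mutual coherence of any two orthonormal bases of `ℂ^N` is at least
`N^{-1/2}`, and this lower bound is attained by the discrete Fourier basis and
the standard basis. -/
theorem stmt_16 (N : ℕ) (hN : 0 < N) :
    (∀ A B : Fin N → Fin N → ℂ,
      (∀ j₁ j₂ : Fin N,
        (∑ t, (starRingEnd ℂ) (A j₁ t) * A j₂ t) = if j₁ = j₂ then 1 else 0) →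
      (∀ k₁ k₂ : Fin N,
        (∑ t, (starRingEnd ℂ) (B k₁ t) * B k₂ t) = if k₁ = k₂ then 1 else 0) →
      1 / Real.sqrt N ≤ mutualCoherence A B) ∧
    mutualCoherence (dftBasis N) (stdBasis N) = 1 / Real.sqrt N := by
  haveI : Nonempty (Fin N) := ⟨⟨0, hN⟩⟩
  have hNR : (0:ℝ) < N := by exact_mod_cast hN
  have hsq : (0:ℝ) < Real.sqrt N := Real.sqrt_pos.2 hNR
  constructor
  · intro A B hA hB
    -- rows of A orthonormal ⇒ A Aᴴ = 1 ⇒ Aᴴ A = 1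
    set MA : Matrix (Fin N) (Fin N) ℂ := Matrix.of A with hMA
    have h1 : MA * MA.conjTranspose = 1 := by
      ext j₁ j₂
      have h := congrArg (starRingEnd ℂ) (hA j₁ j₂)
      simp only [map_sum, map_mul, starRingEnd_apply, star_star] at h
      simp only [Matrix.mul_apply, Matrix.conjTranspose_apply, Matrix.one_apply, hMA,
        Matrix.of_apply]
      rw [h]
      by_cases hc : j₁ = j₂ <;> simp [hc]
    have h2 : MA.conjTranspose * MA = 1 := mul_eq_one_comm.mp h1
    have hA' : ∀ t₁ t₂ : Fin N,
        (∑ j, (starRingEnd ℂ) (A j t₁) * A j t₂) = if t₁ = t₂ then 1 else 0 := by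
      intro t₁ t₂
      have := congrFun (congrFun h2 t₁) t₂
      simpa [Matrix.mul_apply, Matrix.conjTranspose_apply, Matrix.one_apply, hMA] using this
    set k0 : Fin N := ⟨0, hN⟩ with hk0
    set M : Fin N → ℂ := fun j => ∑ t, (starRingEnd ℂ) (A j t) * B k0 t with hM
    have key : (∑ j, (starRingEnd ℂ) (M j) * M j) = 1 := by
      have expand : ∀ j, (starRingEnd ℂ) (M j) * M j
          = ∑ t₁, ∑ t₂, ((starRingEnd ℂ) (B k0 t₁) * B k0 t₂) *
              ((starRingEnd ℂ) (A j t₂) * A j t₁) := by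
        intro j
        rw [hM, map_sum, Finset.sum_mul_sum]
        refine Finset.sum_congr rfl fun t₁ _ => Finset.sum_congr rfl fun t₂ _ => ?_
        simp only [map_mul, Complex.conj_conj]
        ring
      simp_rw [expand]
      calc ∑ j, ∑ t₁, ∑ t₂, ((starRingEnd ℂ) (B k0 t₁) * B k0 t₂) *
              ((starRingEnd ℂ) (A j t₂) * A j t₁)
          = ∑ t₁, ∑ t₂, ((starRingEnd ℂ) (B k0 t₁) * B k0 t₂) *
              ∑ j, (starRingEnd ℂ) (A j t₂) * A j t₁ := by
            rw [Finset.sum_comm]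
            refine Finset.sum_congr rfl fun t₁ _ => ?_
            rw [Finset.sum_comm]
            exact Finset.sum_congr rfl fun t₂ _ => (Finset.mul_sum _ _ _).symm
        _ = ∑ t₁, (starRingEnd ℂ) (B k0 t₁) * B k0 t₁ := by
            refine Finset.sum_congr rfl fun t₁ _ => ?_
            simp_rw [hA']
            simp
        _ = 1 := by simpa using hB k0 k0
    have keyR : (∑ j, Complex.normSq (M j)) = 1 := by
      have : ((∑ j, Complex.normSq (M j) : ℝ) : ℂ) = 1 := by
        push_cast
        rw [← key]
        refine Finset.sum_congr rfl fun j _ => ?_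
        rw [Complex.normSq_eq_conj_mul_self]
      exact_mod_cast this
    obtain ⟨j, -, hj⟩ : ∃ j ∈ Finset.univ, (1 : ℝ) / N ≤ Complex.normSq (M j) := by
      apply Finset.exists_le_of_sum_le (Finset.univ_nonempty)
      rw [keyR]
      simp only [Finset.sum_const, Finset.card_univ, Fintype.card_fin, nsmul_eq_mul,
        mul_one_div]
      exact le_of_eq (div_self hNR.ne')
    have habs : 1 / Real.sqrt N ≤ ‖M j‖ := by
      rw [Complex.norm_def, one_div, ← Real.sqrt_inv]
      exact Real.sqrt_le_sqrt (by rwa [one_div] at hj)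
    calc (1:ℝ) / Real.sqrt N ≤ ‖M j‖ := habs
      _ ≤ ⨆ k, ‖∑ t, (starRingEnd ℂ) (A j t) * B k t‖ :=
          le_ciSup (f := fun k => ‖∑ t, (starRingEnd ℂ) (A j t) * B k t‖)
            (Finite.bddAbove_range _) k0
      _ ≤ mutualCoherence A B :=
          le_ciSup (f := fun j => ⨆ k, ‖∑ t, (starRingEnd ℂ) (A j t) * B k t‖)
            (Finite.bddAbove_range _) j
  · have hval : ∀ j k : Fin N,
        ‖∑ t, (starRingEnd ℂ) (dftBasis N j t) * stdBasis N k t‖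
          = 1 / Real.sqrt N := by
      intro j k
      have h1 : (∑ t, (starRingEnd ℂ) (dftBasis N j t) * stdBasis N k t)
          = (starRingEnd ℂ) (dftBasis N j k) := by
        simp [stdBasis, mul_ite]
      rw [h1, Complex.norm_conj]
      unfold dftBasis
      rw [norm_mul, Complex.norm_real, Real.norm_eq_abs]
      have h2 : (2 * (π:ℂ) * Complex.I * ((k:ℕ):ℂ) * ((j:ℕ):ℂ) / (N:ℂ))
          = ((2 * π * k * j / N : ℝ) : ℂ) * Complex.I := by push_cast; ring
      rw [h2, Complex.norm_exp_ofReal_mul_I, mul_one, abs_of_nonneg (by positivity)]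
    simp only [mutualCoherence]
    simp_rw [hval]
    rw [ciSup_const, ciSup_const]
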